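/- Let d ≥ 1 and let f be a nonzero harmonic binary d-form. Then f admits no Waring decomposition with fewer than d summands; that is, there do not exist an integer r < d, real numbers λ₁,…,λ_r, and real linear forms L₁,…,L_r with f = Σ_{i=1}^r λᵢ Lᵢ^d. Equivalently, WR(f) ≥ d. -/

import Mathlib

open MvPolynomial Finset

/-- The Laplacian `∂x² + ∂y²` applied to a binary polynomial. -/
noncomputable def lap (f : MvPolynomial (Fin 2) ℝ) : MvPolynomial (Fin 2) ℝ :=
  pderiv 0 (pderiv 0 f) + pderiv 1 (pderiv 1 f)

/-- Apply the constant-coefficient differential operator encoded by the polynomial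
`g ∈ ℝ[∂x,∂y]` (with `∂x = X 0`, `∂y = X 1`) to the polynomial `f`. -/
noncomputable def diffOp (g f : MvPolynomial (Fin 2) ℝ) : MvPolynomial (Fin 2) ℝ :=
  (AddMonoidAlgebra.coeff g).sum fun m c =>
    c • ((fun p => pderiv (0 : Fin 2) p)^[m 0] ((fun p => pderiv (1 : Fin 2) p)^[m 1] f))

/-- The harmonic form `h_{d,0} = Σ_j (−1)^j C(d,2j) x^(d−2j) y^(2j)`. -/
noncomputable def h0 (d : ℕ) : MvPolynomial (Fin 2) ℝ :=
  ∑ j ∈ Finset.range (d / 2 + 1),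
    C ((-1 : ℝ) ^ j * (d.choose (2 * j) : ℝ)) * X 0 ^ (d - 2 * j) * X 1 ^ (2 * j)

/-- The harmonic form `h_{d,1} = Σ_j (−1)^j C(d,2j+1) x^(d−2j−1) y^(2j+1)`. -/
noncomputable def h1 (d : ℕ) : MvPolynomial (Fin 2) ℝ :=
  ∑ j ∈ Finset.range ((d - 1) / 2 + 1),
    C ((-1 : ℝ) ^ j * (d.choose (2 * j + 1) : ℝ)) * X 0 ^ (d - (2 * j + 1)) * X 1 ^ (2 * j + 1)

/-- `f` is a sum of `r` real multiples of `d`-th powers of real linear forms. -/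
def IsWaringDecomp (d r : ℕ) (f : MvPolynomial (Fin 2) ℝ) : Prop :=
  ∃ (lam a b : Fin r → ℝ), f = ∑ i, lam i • (C (a i) * X 0 + C (b i) * X 1) ^ d

/-- The (real) Waring rank of `f` as a binary `d`-form: the smallest positive `r`
admitting a Waring decomposition of length `r`. -/
noncomputable def waringRank (d : ℕ) (f : MvPolynomial (Fin 2) ℝ) : ℕ :=
  sInf {r : ℕ | 0 < r ∧ IsWaringDecomp d r f}


/-- The apolar pairing. -/
noncomputable def pairF (g f : MvPolynomial (Fin 2) ℝ) : ℝ :=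
  ∑ m ∈ f.support, coeff m g * coeff m f * ((m 0).factorial : ℝ) * ((m 1).factorial : ℝ)

lemma pairF_eq_sum (g f : MvPolynomial (Fin 2) ℝ) (S : Finset (Fin 2 →₀ ℕ))
    (hS : f.support ⊆ S) :
    pairF g f = ∑ m ∈ S, coeff m g * coeff m f * ((m 0).factorial : ℝ) * ((m 1).factorial : ℝ) := by
  exact Finset.sum_subset hS (fun m _ hm => by
    rw [MvPolynomial.notMem_support_iff.mp hm]; ring)

lemma pairF_zero_right (g : MvPolynomial (Fin 2) ℝ) : pairF g 0 = 0 := by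
  simp [pairF]

lemma pairF_add_left (g g' f : MvPolynomial (Fin 2) ℝ) :
    pairF (g + g') f = pairF g f + pairF g' f := by
  unfold pairF
  rw [← Finset.sum_add_distrib]
  exact Finset.sum_congr rfl fun m _ => by rw [coeff_add]; ring

lemma pairF_add_right (g f f' : MvPolynomial (Fin 2) ℝ) :
    pairF g (f + f') = pairF g f + pairF g f' := by
  classical
  set S := (f + f').support ∪ (f.support ∪ f'.support) with hSdef
  rw [pairF_eq_sum g (f+f') S (by intro m hm; exact Finset.mem_union_left _ hm),
      pairF_eq_sum g f S (by intro m hm; exact Finset.mem_union_right _ (Finset.mem_union_left _ hm)),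
      pairF_eq_sum g f' S (by intro m hm; exact Finset.mem_union_right _ (Finset.mem_union_right _ hm)),
      ← Finset.sum_add_distrib]
  exact Finset.sum_congr rfl fun m _ => by rw [coeff_add]; ring

lemma pairF_smul_right (g f : MvPolynomial (Fin 2) ℝ) (c : ℝ) :
    pairF g (c • f) = c * pairF g f := by
  rw [pairF_eq_sum g (c • f) f.support support_smul, pairF, Finset.mul_sum]
  exact Finset.sum_congr rfl fun m _ => by rw [coeff_smul]; simp; ring

lemma pairF_sum_right {ι : Type*} (g : MvPolynomial (Fin 2) ℝ) (s : Finset ι)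
    (F : ι → MvPolynomial (Fin 2) ℝ) :
    pairF g (∑ i ∈ s, F i) = ∑ i ∈ s, pairF g (F i) := by
  classical
  induction s using Finset.induction_on with
  | empty => simp [pairF_zero_right]
  | insert a s h ih =>
                   rw [Finset.sum_insert h, pairF_add_right, ih, Finset.sum_insert h]

lemma pairF_monomial_left (μ : Fin 2 →₀ ℕ) (c : ℝ) (f : MvPolynomial (Fin 2) ℝ) :
    pairF (monomial μ c) f = c * coeff μ f * ((μ 0).factorial : ℝ) * ((μ 1).factorial : ℝ) := by
  classical
  unfold pairF
  rw [show (∑ m ∈ f.support, coeff m (monomial μ c) * coeff m f * ((m 0).factorial : ℝ) * ((m 1).factorial : ℝ))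
      = ∑ m ∈ f.support, if m = μ then c * coeff m f * ((m 0).factorial : ℝ) * ((m 1).factorial : ℝ) else 0 from
    Finset.sum_congr rfl fun m _ => by
      rw [coeff_monomial]
      by_cases h : μ = m
      · subst h; simp
      · rw [if_neg h, if_neg (fun hh => h hh.symm)]; ring]
  rw [Finset.sum_ite_eq' f.support μ]
  by_cases h : μ ∈ f.support
  · rw [if_pos h]
  · rw [if_neg h, MvPolynomial.notMem_support_iff.mp h]; ring

lemma pairF_monomial_right (g : MvPolynomial (Fin 2) ℝ) (μ : Fin 2 →₀ ℕ) (c : ℝ) :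
    pairF g (monomial μ c) = coeff μ g * c * ((μ 0).factorial : ℝ) * ((μ 1).factorial : ℝ) := by
  classical
  by_cases h : c = 0
  · subst h; simp [pairF]
  · unfold pairF
    rw [support_monomial, if_neg h, Finset.sum_singleton, coeff_monomial, if_pos rfl]

lemma coeff_pderiv' (i : Fin 2) (μ : Fin 2 →₀ ℕ) (f : MvPolynomial (Fin 2) ℝ) :
    coeff μ (pderiv i f) = ((μ i : ℝ) + 1) * coeff (μ + Finsupp.single i 1) f := by
  classical
  induction f using MvPolynomial.induction_on' with
  | add p q hp hq => rw [map_add, coeff_add, coeff_add, hp, hq]; ring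
  | monomial s a =>
    rw [pderiv_monomial, coeff_monomial, coeff_monomial]
    by_cases h : s = μ + Finsupp.single i 1
    · rw [if_pos h, if_pos]
      · subst h; simp [Finsupp.add_apply, Finsupp.single_apply]; ring
      · subst h; simp
    · rw [if_neg h]
      by_cases h2 : s - Finsupp.single i 1 = μ
      · rw [if_pos h2]
        have hsi : s i = 0 := by
          by_contra hsi
          apply h
          rw [← h2, tsub_add_cancel_of_le]
          rwa [Finsupp.single_le_iff, Nat.one_le_iff_ne_zero]
        simp [hsi]
      · rw [if_neg h2]; ring


lemma coeff_lap (μ : Fin 2 →₀ ℕ) (f : MvPolynomial (Fin 2) ℝ) :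
    coeff μ (lap f) = ((μ 0 : ℝ) + 1) * ((μ 0 : ℝ) + 2) * coeff (μ + Finsupp.single 0 2) f
      + ((μ 1 : ℝ) + 1) * ((μ 1 : ℝ) + 2) * coeff (μ + Finsupp.single 1 2) f := by
  rw [lap, coeff_add, coeff_pderiv', coeff_pderiv', coeff_pderiv', coeff_pderiv']
  have e0 : μ + Finsupp.single (0 : Fin 2) 1 + Finsupp.single 0 1 = μ + Finsupp.single 0 2 := by
    rw [add_assoc, ← Finsupp.single_add]
  have e1 : μ + Finsupp.single (1 : Fin 2) 1 + Finsupp.single 1 1 = μ + Finsupp.single 1 2 := by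
    rw [add_assoc, ← Finsupp.single_add]
  rw [e0, e1]
  simp [Finsupp.add_apply, Finsupp.single_apply]
  push_cast
  ring
lemma pairF_harmonic (h f : MvPolynomial (Fin 2) ℝ) :
    pairF ((X 0 ^ 2 + X 1 ^ 2) * h) f = pairF h (lap f) := by
  induction h using MvPolynomial.induction_on' with
  | add p q hp hq => rw [mul_add, pairF_add_left, hp, hq, pairF_add_left]
  | monomial μ c =>
    rw [add_mul, X_pow_eq_monomial, X_pow_eq_monomial, monomial_mul, monomial_mul,
        pairF_add_left, pairF_monomial_left, pairF_monomial_left, pairF_monomial_left, coeff_lap]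
    simp only [Finsupp.add_apply, Finsupp.single_apply, one_mul]
    norm_num
    rw [show (2 + μ 0).factorial = (μ 0 + 2) * ((μ 0 + 1) * (μ 0).factorial) by
          rw [add_comm 2 (μ 0)]; rw [Nat.factorial_succ, Nat.factorial_succ],
        show (2 + μ 1).factorial = (μ 1 + 2) * ((μ 1 + 1) * (μ 1).factorial) by
          rw [add_comm 2 (μ 1)]; rw [Nat.factorial_succ, Nat.factorial_succ]]
    rw [show Finsupp.single (0:Fin 2) 2 + μ = μ + Finsupp.single 0 2 from add_comm _ _,
        show Finsupp.single (1:Fin 2) 2 + μ = μ + Finsupp.single 1 2 from add_comm _ _]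
    push_cast
    ring
lemma sig_apply0 (k l : ℕ) : (Finsupp.single (0:Fin 2) k + Finsupp.single (1:Fin 2) l : Fin 2 →₀ ℕ) 0 = k := by
  simp [Finsupp.add_apply, Finsupp.single_apply]

lemma sig_apply1 (k l : ℕ) : (Finsupp.single (0:Fin 2) k + Finsupp.single (1:Fin 2) l : Fin 2 →₀ ℕ) 1 = l := by
  simp [Finsupp.add_apply, Finsupp.single_apply]

lemma finsupp_fin_two (m : Fin 2 →₀ ℕ) :
    m = Finsupp.single 0 (m 0) + Finsupp.single 1 (m 1) := by
  ext i
  fin_cases i <;> simp [Finsupp.add_apply, Finsupp.single_apply]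

lemma deg_two (f : MvPolynomial (Fin 2) ℝ) (d : ℕ) (h : f.IsHomogeneous d)
    (m : Fin 2 →₀ ℕ) (hm : coeff m f ≠ 0) : m 0 + m 1 = d := by
  have := h hm
  simp [Finsupp.weight_apply, Finsupp.sum_fintype, Fin.sum_univ_two] at this
  omega

lemma linpow_expand (a b : ℝ) (d : ℕ) :
    (C a * X 0 + C b * X 1 : MvPolynomial (Fin 2) ℝ) ^ d
      = ∑ k ∈ Finset.range (d + 1),
          monomial (Finsupp.single 0 k + Finsupp.single 1 (d - k))
            (a ^ k * b ^ (d - k) * (d.choose k : ℝ)) := by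
  rw [add_pow]
  refine Finset.sum_congr rfl fun k hk => ?_
  rw [mul_pow, mul_pow, ← C_pow, ← C_pow, X_pow_eq_monomial, X_pow_eq_monomial]
  rw [show (C (a^k) * monomial (Finsupp.single 0 k) 1) * (C (b^(d-k)) * monomial (Finsupp.single 1 (d-k)) 1) * (d.choose k : MvPolynomial (Fin 2) ℝ)
      = (C (a^k) * C (b^(d-k)) * C ((d.choose k : ℝ))) * (monomial (Finsupp.single 0 k) 1 * monomial (Finsupp.single 1 (d-k)) 1) by
        rw [← C_eq_coe_nat]; ring]
  rw [monomial_mul, ← C_mul, ← C_mul, C_mul_monomial]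
  ring_nf

lemma eval_eq_range (g : MvPolynomial (Fin 2) ℝ) (d : ℕ) (hg : g.IsHomogeneous d) (a b : ℝ) :
    eval ![a, b] g = ∑ k ∈ Finset.range (d + 1),
      coeff (Finsupp.single 0 k + Finsupp.single 1 (d - k)) g * (a ^ k * b ^ (d - k)) := by
  classical
  rw [eval_eq]
  set σ : ℕ → (Fin 2 →₀ ℕ) := fun k => Finsupp.single 0 k + Finsupp.single 1 (d - k) with hσ
  have hσ0 : ∀ k, σ k 0 = k := fun k => by simp [hσ, Finsupp.add_apply, Finsupp.single_apply]
  have hσ1 : ∀ k, σ k 1 = d - k := fun k => by simp [hσ, Finsupp.add_apply, Finsupp.single_apply]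
  have hinj : Set.InjOn σ (Finset.range (d+1)) := fun x _ y _ hxy => by
    have := congrArg (fun m => m 0) hxy; simpa [hσ0] using this
  have hsub : g.support ⊆ (Finset.range (d+1)).image σ := by
    intro m hm
    have hc := MvPolynomial.mem_support_iff.mp hm
    have hdeg := deg_two g d hg m hc
    refine Finset.mem_image.mpr ⟨m 0, Finset.mem_range.mpr (by omega), ?_⟩
    have h1 : d - m 0 = m 1 := by omega
    show σ (m 0) = m
    simp only [hσ, h1]
    exact (finsupp_fin_two m).symm
  rw [Finset.sum_subset hsub (fun m _ hm => by
    rw [MvPolynomial.notMem_support_iff.mp hm]; ring)]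
  rw [Finset.sum_image (fun x hx y hy => hinj hx hy)]
  refine Finset.sum_congr rfl fun k hk => ?_
  congr 1
  rw [Finset.prod_subset (Finset.subset_univ (σ k).support) (fun i _ hi => by
    rw [Finsupp.notMem_support_iff.mp hi, pow_zero])]
  rw [Fin.prod_univ_two, hσ0, hσ1]
  simp

lemma pairF_linpow (g : MvPolynomial (Fin 2) ℝ) (d : ℕ) (hg : g.IsHomogeneous d) (a b : ℝ) :
    pairF g ((C a * X 0 + C b * X 1) ^ d) = (d.factorial : ℝ) * eval ![a, b] g := by
  rw [linpow_expand, pairF_sum_right, eval_eq_range g d hg a b, Finset.mul_sum]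
  refine Finset.sum_congr rfl fun k hk => ?_
  have hk' : k ≤ d := by simpa using Nat.lt_succ_iff.mp (Finset.mem_range.mp hk)
  rw [pairF_monomial_right, sig_apply0, sig_apply1]
  have : (d.choose k : ℝ) * (k.factorial : ℝ) * ((d-k).factorial : ℝ) = (d.factorial : ℝ) := by
    rw [← Nat.cast_mul, ← Nat.cast_mul, Nat.choose_mul_factorial_mul_factorial hk']
  linear_combination (coeff (Finsupp.single 0 k + Finsupp.single 1 (d - k)) g * (a ^ k * b ^ (d - k))) * this
lemma key_vanish (d n : ℕ) (hd : 2 ≤ d) (f : MvPolynomial (Fin 2) ℝ) (hharm : lap f = 0)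
    (lam a b : Fin n → ℝ)
    (hf : f = ∑ i, lam i • (C (a i) * X 0 + C (b i) * X 1) ^ d)
    (h : MvPolynomial (Fin 2) ℝ) (hh : h.IsHomogeneous (d - 2)) :
    ∑ i, lam i * (((a i) ^ 2 + (b i) ^ 2) * eval ![a i, b i] h) = 0 := by
  have hG : ((X 0 ^ 2 + X 1 ^ 2) * h : MvPolynomial (Fin 2) ℝ).IsHomogeneous d := by
    have h2 : (X 0 ^ 2 + X 1 ^ 2 : MvPolynomial (Fin 2) ℝ).IsHomogeneous 2 := by
      have := ((isHomogeneous_X ℝ (0 : Fin 2)).pow 2).add ((isHomogeneous_X ℝ (1 : Fin 2)).pow 2)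
      simpa using this
    have := h2.mul hh
    rwa [show 2 + (d - 2) = d by omega] at this
  have hzero : pairF ((X 0 ^ 2 + X 1 ^ 2) * h) f = 0 := by
    rw [pairF_harmonic, hharm, pairF_zero_right]
  rw [hf, pairF_sum_right] at hzero
  have heach : ∀ i, pairF ((X 0 ^ 2 + X 1 ^ 2) * h) (lam i • (C (a i) * X 0 + C (b i) * X 1) ^ d)
      = (d.factorial : ℝ) * (lam i * (((a i) ^ 2 + (b i) ^ 2) * eval ![a i, b i] h)) := by
    intro i
    rw [pairF_smul_right, pairF_linpow _ d hG]
    have : eval ![a i, b i] ((X 0 ^ 2 + X 1 ^ 2) * h)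
        = ((a i) ^ 2 + (b i) ^ 2) * eval ![a i, b i] h := by
      simp
    rw [this]; ring
  rw [Finset.sum_congr rfl (fun i _ => heach i), ← Finset.mul_sum] at hzero
  have hdf : (d.factorial : ℝ) ≠ 0 := Nat.cast_ne_zero.mpr (Nat.factorial_ne_zero d)
  exact (mul_eq_zero.mp hzero).resolve_left hdf

lemma sq_add_sq_pos {a b : ℝ} (h : ¬(a = 0 ∧ b = 0)) : 0 < a ^ 2 + b ^ 2 := by
  rcases Classical.em (a = 0) with ha | ha
  · have hb : b ≠ 0 := fun hb => h ⟨ha, hb⟩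
    positivity
  · positivity

lemma prop_exists {ap bp aq bq : ℝ} (h : ¬(ap = 0 ∧ bp = 0)) (hdet : bp * aq - ap * bq = 0) :
    ∃ t : ℝ, aq = t * ap ∧ bq = t * bp := by
  rcases Classical.em (ap = 0) with ha | ha
  · have hb : bp ≠ 0 := fun hb => h ⟨ha, hb⟩
    refine ⟨bq / bp, ?_, by field_simp⟩
    rw [ha] at hdet ⊢
    have : bp * aq = 0 := by linarith
    rcases mul_eq_zero.mp this with h1 | h1
    · exact absurd h1 hb
    · rw [h1]; ring
  · refine ⟨aq / ap, by field_simp, ?_⟩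
    field_simp
    nlinarith [hdet]

lemma waring_zero (d : ℕ) (hd : 0 < d) :
    ∀ r, r < d → ∀ f : MvPolynomial (Fin 2) ℝ, lap f = 0 → IsWaringDecomp d r f → f = 0 := by
  intro r
  induction r with
  | zero =>
    rintro _ f _ ⟨lam, a, b, hf⟩
    simpa using hf
  | succ r ih =>
    rintro hr f hharm ⟨lam, a, b, hf⟩
    have hrd : r < d := Nat.lt_of_succ_lt hr
    set i0 : Fin (r + 1) := Fin.last r with hi0
    -- notation for the powers
    set P : Fin (r + 1) → MvPolynomial (Fin 2) ℝ :=
      fun i => (C (a i) * X 0 + C (b i) * X 1) ^ d with hP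
    suffices hsuf : IsWaringDecomp d r f from ih hrd f hharm hsuf
    by_cases hA : ∃ i, a i = 0 ∧ b i = 0
    · -- drop a zero linear form
      obtain ⟨i, ha, hb⟩ := hA
      refine ⟨lam ∘ i.succAbove, a ∘ i.succAbove, b ∘ i.succAbove, ?_⟩
      rw [hf, Fin.sum_univ_succAbove _ i, ha, hb]
      simp [zero_pow hd.ne']
    · push_neg at hA
      by_cases hB : ∃ j : Fin r, b j.castSucc * a i0 - a j.castSucc * b i0 = 0
      · -- merge the last form into a proportional earlier one
        obtain ⟨j, hj⟩ := hB
        have hAj : ¬(a j.castSucc = 0 ∧ b j.castSucc = 0) := by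
          intro ⟨h1, h2⟩; exact (hA j.castSucc h1) h2
        obtain ⟨t, hta, htb⟩ := prop_exists hAj hj
        have hPeq : P i0 = C (t ^ d) * P j.castSucc := by
          rw [hP]
          simp only [hta, htb]
          rw [show (C (t * a j.castSucc) * X 0 + C (t * b j.castSucc) * X 1 : MvPolynomial (Fin 2) ℝ)
              = C t * (C (a j.castSucc) * X 0 + C (b j.castSucc) * X 1) by
            rw [map_mul, map_mul]; ring]
          rw [mul_pow, ← C_pow]
        classical
        refine ⟨fun i => if i = j then lam i.castSucc + lam i0 * t ^ d else lam i.castSucc,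
          fun i => a i.castSucc, fun i => b i.castSucc, ?_⟩
        rw [hf, Fin.sum_univ_castSucc
          (f := fun i => lam i • (C (a i) * X 0 + C (b i) * X 1) ^ d)]
        have hsplit : ∀ i : Fin r,
            (if i = j then lam i.castSucc + lam i0 * t ^ d else lam i.castSucc) •
              (C (a i.castSucc) * X 0 + C (b i.castSucc) * X 1) ^ d
            = lam i.castSucc • P i.castSucc
              + (if i = j then (lam i0 * t ^ d) • P j.castSucc else 0) := by
          intro i
          by_cases h : i = j
          · subst h; rw [if_pos rfl, if_pos rfl, add_smul, hP]
          · rw [if_neg h, if_neg h, add_zero, hP]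
        rw [Finset.sum_congr rfl fun i _ => hsplit i, Finset.sum_add_distrib,
            Finset.sum_ite_eq' Finset.univ j
              (fun _ => (lam i0 * t ^ d) • P j.castSucc),
            if_pos (Finset.mem_univ j)]
        have : (lam i0 * t ^ d) • P j.castSucc = lam i0 • P i0 := by
          rw [hPeq, mul_smul, smul_eq_C_mul (P j.castSucc) (t ^ d)]
        rw [this, hP]
      · -- the last point is projectively distinct from all previous points: its coeff is 0
        push_neg at hB
        have hd2 : 2 ≤ d := by omega
        have hr2 : r ≤ d - 2 := by omega
        set h : MvPolynomial (Fin 2) ℝ :=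
          (∏ j : Fin r, (C (b j.castSucc) * X 0 - C (a j.castSucc) * X 1)) *
            (C (a i0) * X 0 + C (b i0) * X 1) ^ (d - 2 - r) with hhdef
        have hhom : h.IsHomogeneous (d - 2) := by
          have h1 : (∏ j : Fin r, (C (b j.castSucc) * X 0 - C (a j.castSucc) * X 1)
              : MvPolynomial (Fin 2) ℝ).IsHomogeneous r := by
            have := MvPolynomial.IsHomogeneous.prod Finset.univ
              (fun j : Fin r => (C (b j.castSucc) * X 0 - C (a j.castSucc) * X 1 :
                MvPolynomial (Fin 2) ℝ)) (fun _ => 1) (fun j _ => by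
                  refine MvPolynomial.IsHomogeneous.sub ?_ ?_
                  · simpa using (isHomogeneous_C (Fin 2) (b j.castSucc)).mul
                      (isHomogeneous_X ℝ (0 : Fin 2))
                  · simpa using (isHomogeneous_C (Fin 2) (a j.castSucc)).mul
                      (isHomogeneous_X ℝ (1 : Fin 2)))
            simpa using this
          have h2 : ((C (a i0) * X 0 + C (b i0) * X 1 : MvPolynomial (Fin 2) ℝ) ^ (d - 2 - r)).IsHomogeneous (d - 2 - r) := by
            have hl : (C (a i0) * X 0 + C (b i0) * X 1 : MvPolynomial (Fin 2) ℝ).IsHomogeneous 1 := by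
              refine MvPolynomial.IsHomogeneous.add ?_ ?_
              · simpa using (isHomogeneous_C (Fin 2) (a i0)).mul (isHomogeneous_X ℝ (0 : Fin 2))
              · simpa using (isHomogeneous_C (Fin 2) (b i0)).mul (isHomogeneous_X ℝ (1 : Fin 2))
            simpa using hl.pow (d - 2 - r)
          have := h1.mul h2
          rwa [show r + (d - 2 - r) = d - 2 by omega] at this
        have hvan := key_vanish d (r + 1) hd2 f hharm lam a b hf h hhom
        -- all terms with index < last vanish
        have hev : ∀ i : Fin (r + 1), eval ![a i, b i] h
            = (∏ j : Fin r, (b j.castSucc * a i - a j.castSucc * b i)) *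
              (a i0 * a i + b i0 * b i) ^ (d - 2 - r) := by
          intro i
          rw [hhdef]
          simp [Matrix.cons_val_zero, Matrix.cons_val_one]
        have hzero_lt : ∀ j : Fin r,
            lam j.castSucc * ((a j.castSucc ^ 2 + b j.castSucc ^ 2) * eval ![a j.castSucc, b j.castSucc] h) = 0 := by
          intro j
          rw [hev]
          rw [Finset.prod_eq_zero (Finset.mem_univ j) (by ring)]
          ring
        rw [Fin.sum_univ_castSucc (f := fun i => lam i * ((a i ^ 2 + b i ^ 2) * eval ![a i, b i] h)),
            Finset.sum_congr rfl (fun j _ => hzero_lt j), Finset.sum_const_zero, zero_add] at hvan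
        rw [hev i0] at hvan
        have hlam : lam i0 = 0 := by
          have hprod : (∏ j : Fin r, (b j.castSucc * a i0 - a j.castSucc * b i0)) ≠ 0 :=
            Finset.prod_ne_zero_iff.mpr fun j _ => hB j
          have hsq : (0:ℝ) < a i0 ^ 2 + b i0 ^ 2 :=
            sq_add_sq_pos (fun hab => hA i0 hab.1 hab.2)
          have hpow : (a i0 * a i0 + b i0 * b i0) ^ (d - 2 - r) ≠ 0 :=
            pow_ne_zero _ (by nlinarith [hsq])
          rcases mul_eq_zero.mp hvan with h1 | h1
          · exact h1
          · exact absurd h1 (mul_ne_zero hsq.ne' (mul_ne_zero hprod hpow))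
        refine ⟨lam ∘ Fin.castSucc, a ∘ Fin.castSucc, b ∘ Fin.castSucc, ?_⟩
        rw [hf, Fin.sum_univ_castSucc
          (f := fun i => lam i • (C (a i) * X 0 + C (b i) * X 1) ^ d), hlam, zero_smul, add_zero]
        rfl
lemma homog_support_subset (g : MvPolynomial (Fin 2) ℝ) (d : ℕ) (hg : g.IsHomogeneous d) :
    g.support ⊆ (Finset.range (d + 1)).image
      (fun k => Finsupp.single 0 k + Finsupp.single 1 (d - k)) := by
  intro m hm
  have hc := MvPolynomial.mem_support_iff.mp hm
  have hdeg := deg_two g d hg m hc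
  refine Finset.mem_image.mpr ⟨m 0, Finset.mem_range.mpr (by omega), ?_⟩
  have h1 : d - m 0 = m 1 := by omega
  simp only [h1]
  exact (finsupp_fin_two m).symm

lemma sigma_injective (d : ℕ) : Set.InjOn
    (fun k => Finsupp.single (0 : Fin 2) k + Finsupp.single 1 (d - k))
    (Finset.range (d + 1)) := by
  intro x _ y _ hxy
  have := congrArg (fun m : Fin 2 →₀ ℕ => m 0) hxy
  simpa [sig_apply0] using this

lemma exists_decomp (d : ℕ) (hd : 0 < d) (f : MvPolynomial (Fin 2) ℝ)
    (hf : f.IsHomogeneous d) : IsWaringDecomp d (d + 1) f := by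
  classical
  set σ : ℕ → (Fin 2 →₀ ℕ) := fun k => Finsupp.single 0 k + Finsupp.single 1 (d - k) with hσ
  set M : Matrix (Fin (d + 1)) (Fin (d + 1)) ℝ :=
    fun j k => (j : ℝ) ^ (k : ℕ) * (d.choose k : ℝ) with hM
  have hdet : IsUnit M.det := by
    have hMeq : M = Matrix.vandermonde (fun j : Fin (d + 1) => ((j : ℕ) : ℝ)) *
        Matrix.diagonal (fun k : Fin (d + 1) => (d.choose (k : ℕ) : ℝ)) := by
      ext j k
      rw [Matrix.mul_diagonal, Matrix.vandermonde_apply]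
    rw [hMeq, Matrix.det_mul, Matrix.det_diagonal, Matrix.det_vandermonde]
    rw [isUnit_iff_ne_zero]
    apply mul_ne_zero
    · refine Finset.prod_ne_zero_iff.mpr fun i _ => Finset.prod_ne_zero_iff.mpr fun j hj => ?_
      have hij : i < j := Finset.mem_Ioi.mp hj
      have : (i : ℕ) < (j : ℕ) := hij
      have : ((i : ℕ) : ℝ) < ((j : ℕ) : ℝ) := by exact_mod_cast this
      linarith
    · refine Finset.prod_ne_zero_iff.mpr fun k _ => ?_
      exact_mod_cast (Nat.choose_pos (Nat.lt_succ_iff.mp k.isLt)).ne'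
  set N := M⁻¹ with hN
  have hNM : N * M = 1 := Matrix.nonsing_inv_mul M hdet
  set c : Fin (d + 1) → ℝ := fun k => coeff (σ (k : ℕ)) f with hc
  have hexp : ∀ j : Fin (d + 1), (C ((j : ℕ) : ℝ) * X 0 + C 1 * X 1 : MvPolynomial (Fin 2) ℝ) ^ d
      = ∑ l : Fin (d + 1), monomial (σ (l : ℕ)) (M j l) := by
    intro j
    rw [linpow_expand, ← Fin.sum_univ_eq_sum_range
      (fun k => monomial (σ k) (((j : ℕ) : ℝ) ^ k * (1 : ℝ) ^ (d - k) * (d.choose k : ℝ)))]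
    exact Finset.sum_congr rfl fun l _ => by rw [one_pow, mul_one, hM]
  have hf' : f = ∑ k : Fin (d + 1), monomial (σ (k : ℕ)) (c k) := by
    conv_lhs => rw [← MvPolynomial.support_sum_monomial_coeff f]
    rw [Finset.sum_subset (homog_support_subset f d hf) (fun m _ hm => by
      rw [MvPolynomial.notMem_support_iff.mp hm, map_zero]),
      Finset.sum_image (fun x hx y hy => sigma_injective d hx hy),
      ← Fin.sum_univ_eq_sum_range (fun k => monomial (σ k) (coeff (σ k) f))]
  refine ⟨fun j => ∑ k, c k * N k j, fun j => ((j : ℕ) : ℝ), fun _ => 1, ?_⟩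
  rw [Finset.sum_congr rfl (fun j (_ : j ∈ Finset.univ) => by rw [hexp j, Finset.smul_sum])]
  rw [Finset.sum_comm]
  rw [hf']
  refine Finset.sum_congr rfl fun l _ => ?_
  rw [Finset.sum_congr rfl (fun j (_ : j ∈ Finset.univ) =>
      (by rw [MvPolynomial.smul_monomial] :
        (∑ k, c k * N k j) • monomial (σ (l : ℕ)) (M j l)
          = monomial (σ (l : ℕ)) ((∑ k, c k * N k j) • M j l))),
    ← map_sum (monomial (σ (l : ℕ)))]
  congr 1
  have : ∀ j, (∑ k, c k * N k j) • M j l = ∑ k, c k * N k j * M j l := by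
    intro j; rw [smul_eq_mul, Finset.sum_mul]
  rw [Finset.sum_congr rfl fun j _ => this j, Finset.sum_comm]
  have : ∀ k, (∑ j, c k * N k j * M j l) = c k * (N * M) k l := by
    intro k; rw [Matrix.mul_apply, Finset.mul_sum]
    exact Finset.sum_congr rfl fun j _ => by ring
  rw [Finset.sum_congr rfl fun k _ => this k, hNM]
  simp only [Matrix.one_apply]
  rw [show (∑ k, c k * if k = l then (1:ℝ) else 0) = ∑ k, if k = l then c k else 0 from
    Finset.sum_congr rfl fun k _ => by split_ifs <;> ring]
  rw [Finset.sum_ite_eq' Finset.univ l c, if_pos (Finset.mem_univ l)]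

/-- a nonzero harmonic binary `d`-form admits no Waring decomposition with
fewer than `d` summands; equivalently its Waring rank is at least `d`. -/
theorem harmonic_waring_rank_lower_bound
    (d : ℕ) (hd : 0 < d) (f : MvPolynomial (Fin 2) ℝ)
    (hf : f.IsHomogeneous d) (hf0 : f ≠ 0) (hharm : lap f = 0) :
    (¬ ∃ r : ℕ, r < d ∧ IsWaringDecomp d r f) ∧ d ≤ waringRank d f := by
  constructor
  · rintro ⟨r, hr, hdec⟩
    exact hf0 (waring_zero d hd r hr f hharm hdec)
  · have hmem : (d + 1) ∈ {r : ℕ | 0 < r ∧ IsWaringDecomp d r f} :=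
      ⟨Nat.succ_pos d, exists_decomp d hd f hf⟩
    by_contra hlt
    push_neg at hlt
    rw [waringRank] at hlt
    have hSmem := Nat.sInf_mem (⟨d + 1, hmem⟩ :
      {r : ℕ | 0 < r ∧ IsWaringDecomp d r f}.Nonempty)
    exact hf0 (waring_zero d hd _ hlt f hharm hSmem.2)
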